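/- Let L be a real n×n matrix (n ≥ 1) with L_{ij} ≤ 0 for all i ≠ j and with every row summing to zero. Define a directed graph on the index set Fin n by putting an arc from i to j whenever i ≠ j and L_{ij} ≠ 0, and suppose this digraph is strongly connected (for all i, j there is a directed path from i to j, i.e., the reflexive-transitive closure of the arc relation relates every pair). Then the kernel of L (as a linear map ℝⁿ → ℝⁿ via v ↦ L·v) is exactly the one-dimensional span of the all-ones vector 𝟙: ker L = ℝ·𝟙. -/

import Mathlib

open Matrix

/-- If `L` is Laplacian-type (nonpositive off-diagonal entries, zero
row sums) and the digraph with an arc `i → j` whenever `i ≠ j` and `L_{ij} ≠ 0` is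
strongly connected, then the kernel of `L` is exactly the span of the all-ones
vector `𝟙`. -/
theorem laplacian_kernel_eq_span_ones_of_strongly_connected
    (n : ℕ) (hn : 1 ≤ n) (L : Matrix (Fin n) (Fin n) ℝ)
    (hoff : ∀ i j, i ≠ j → L i j ≤ 0)
    (hrow : ∀ i, ∑ j, L i j = 0)
    (hconn : ∀ i j : Fin n,
      Relation.ReflTransGen (fun a b => a ≠ b ∧ L a b ≠ 0) i j) :
    LinearMap.ker L.mulVecLin
      = Submodule.span ℝ {(fun _ => (1 : ℝ) : Fin n → ℝ)} := by
  haveI : NeZero n := ⟨Nat.one_le_iff_ne_zero.mp hn⟩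
  apply le_antisymm
  · intro v hv
    rw [LinearMap.mem_ker] at hv
    -- pick index achieving max
    obtain ⟨i0, -, hmax⟩ := Finset.exists_max_image Finset.univ v ⟨0, Finset.mem_univ 0⟩
    have hmax' : ∀ k, v k ≤ v i0 := fun k => hmax k (Finset.mem_univ k)
    -- single step lemma
    have step : ∀ b c : Fin n, v b = v i0 → (b ≠ c ∧ L b c ≠ 0) → v c = v i0 := by
      intro b c hb ⟨hbc, hL⟩
      have h1 : ∑ j, L b j * (v b - v j) = 0 := by
        have h2 : (L.mulVecLin v) b = 0 := by rw [hv]; rfl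
        have h3 : ∑ j, L b j * v j = 0 := by
          simpa [Matrix.mulVecLin, Matrix.mulVec, dotProduct] using h2
        calc ∑ j, L b j * (v b - v j)
            = (∑ j, L b j) * v b - ∑ j, L b j * v j := by
              rw [Finset.sum_mul, ← Finset.sum_sub_distrib]; exact Finset.sum_congr rfl fun j _ => by ring
          _ = 0 := by rw [hrow b, h3]; ring
      have hnp : ∀ j ∈ Finset.univ, L b j * (v b - v j) ≤ 0 := by
        intro j _
        rcases eq_or_ne b j with rfl | hne
        · simp
        · exact mul_nonpos_of_nonpos_of_nonneg (hoff b j hne)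
            (by rw [hb]; linarith [hmax' j])
      have hall := (Finset.sum_eq_zero_iff_of_nonpos hnp).mp h1 c (Finset.mem_univ c)
      have : v b - v c = 0 := by
        rcases mul_eq_zero.mp hall with h | h
        · exact absurd h hL
        · exact h
      linarith [hb, this]
    have hconst : ∀ j, v j = v i0 := by
      intro j
      induction hconn i0 j with
      | refl => rfl
      | tail _ harc ih => exact step _ _ ih harc
    have : v = v i0 • (fun _ => (1 : ℝ) : Fin n → ℝ) := by
      funext k; simp [hconst k]
    rw [this]
    exact Submodule.smul_mem _ _ (Submodule.mem_span_singleton_self _)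
  · rw [Submodule.span_le, Set.singleton_subset_iff]
    rw [SetLike.mem_coe, LinearMap.mem_ker]
    funext i
    simp [Matrix.mulVecLin, Matrix.mulVec, dotProduct, hrow i]
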